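/- Let λ₀ ∈ ℝ and let f : (0,∞) → ℂ be measurable such that t ↦ e^{−λt} f(t) is absolutely integrable on (0,∞) for every λ > λ₀. Then: (1) for every k ∈ ℕ and every s ∈ ℂ with Re s > λ₀, the function t ↦ t^k e^{−st} f(t) is absolutely integrable on (0,∞); (2) the Laplace transform F(s) = ∫₀^∞ e^{−st} f(t) dt is holomorphic on the half-plane {s ∈ ℂ : Re s > λ₀}; (3) for every k ∈ ℕ and every s with Re s > λ₀, the k-th derivative satisfies F^{(k)}(s) = (−1)^k ∫₀^∞ t^k e^{−st} f(t) dt. -/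

import Mathlib

open MeasureTheory

lemma aux_pow_exp (n : ℕ) {ε : ℝ} (hε : 0 < ε) :
    ∃ C : ℝ, 0 ≤ C ∧ ∀ t : ℝ, 0 ≤ t → t ^ n * Real.exp (-ε * t) ≤ C := by
  refine ⟨(Nat.factorial n : ℝ) / ε ^ n, by positivity, fun t ht => ?_⟩
  have h := Real.pow_div_factorial_le_exp (x := ε * t) (by positivity) n
  rw [mul_pow] at h
  have hexp : 0 < Real.exp (ε * t) := Real.exp_pos _
  rw [neg_mul, Real.exp_neg]
  rw [div_le_iff₀ (by positivity)] at h
  have hle : t ^ n ≤ (Nat.factorial n : ℝ) / ε ^ n * Real.exp (ε * t) := by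
    rw [div_mul_eq_mul_div, le_div_iff₀ (by positivity)]
    nlinarith [pow_nonneg ht n, pow_pos hε n]
  calc t ^ n * (Real.exp (ε * t))⁻¹
      ≤ ((Nat.factorial n : ℝ) / ε ^ n * Real.exp (ε * t)) * (Real.exp (ε*t))⁻¹ := by gcongr
    _ = (Nat.factorial n : ℝ) / ε ^ n := by field_simp

lemma aux_norm (f : ℝ → ℂ) (k : ℕ) (x : ℂ) (t : ℝ) :
    ‖(t : ℂ) ^ k * Complex.exp (-x * t) * f t‖ = |t| ^ k * Real.exp (-x.re * t) * ‖f t‖ := by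
  simp [norm_mul, norm_pow, Complex.norm_exp, Complex.norm_real,
    Complex.neg_re, Complex.mul_re, Complex.ofReal_re, Complex.ofReal_im]

lemma aux_key (f : ℝ → ℂ) (k : ℕ) {lam C : ℝ} {x : ℂ} (t : ℝ) (ht : 0 < t)
    (hC : t ^ k * Real.exp (-(x.re - lam) * t) ≤ C) :
    ‖(t : ℂ) ^ k * Complex.exp (-x * t) * f t‖
      ≤ C * ‖(Real.exp (-lam * t) : ℂ) * f t‖ := by
  rw [aux_norm, abs_of_pos ht]
  have h2 : ‖(Real.exp (-lam * t) : ℂ) * f t‖ = Real.exp (-lam * t) * ‖f t‖ := by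
    simp [norm_mul, Complex.norm_real, Real.abs_exp, Complex.norm_exp,
      Complex.neg_re, Complex.mul_re, Complex.ofReal_re, Complex.ofReal_im]
  rw [h2]
  have he : Real.exp (-x.re * t) = Real.exp (-(x.re - lam) * t) * Real.exp (-lam * t) := by
    rw [← Real.exp_add]; ring_nf
  have hBn : (0:ℝ) ≤ Real.exp (-lam * t) * ‖f t‖ := by positivity
  calc t ^ k * Real.exp (-x.re * t) * ‖f t‖
      = (t ^ k * Real.exp (-(x.re - lam) * t)) * (Real.exp (-lam * t) * ‖f t‖) := by
        rw [he]; ring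
    _ ≤ C * (Real.exp (-lam * t) * ‖f t‖) := mul_le_mul_of_nonneg_right hC hBn

lemma aux_meas (f : ℝ → ℂ) (hmeas : Measurable f) (k : ℕ) (x : ℂ) :
    AEStronglyMeasurable (fun t : ℝ => (t : ℂ) ^ k * Complex.exp (-x * t) * f t)
      (volume.restrict (Set.Ioi 0)) := by
  apply Measurable.aestronglyMeasurable
  fun_prop

lemma aux_integrable (lam0 : ℝ) (f : ℝ → ℂ) (hmeas : Measurable f)
    (hint : ∀ lam : ℝ, lam0 < lam →
      IntegrableOn (fun t : ℝ => (Real.exp (-lam * t) : ℂ) * f t) (Set.Ioi 0))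
    (k : ℕ) (s : ℂ) (hs : lam0 < s.re) :
    IntegrableOn (fun t : ℝ => (t : ℂ) ^ k * Complex.exp (-s * t) * f t) (Set.Ioi 0) := by
  set lam := (lam0 + s.re) / 2 with hlamdef
  have hlam : lam0 < lam := by rw [hlamdef]; linarith
  have hε : 0 < s.re - lam := by rw [hlamdef]; linarith
  obtain ⟨C, hC0, hC⟩ := aux_pow_exp k hε
  refine Integrable.mono' ((hint lam hlam).norm.const_mul C) (aux_meas f hmeas k s) ?_
  rw [ae_restrict_iff' measurableSet_Ioi]
  filter_upwards with t ht
  exact aux_key f k t ht (hC t ht.le)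

lemma aux_hasDeriv (lam0 : ℝ) (f : ℝ → ℂ) (hmeas : Measurable f)
    (hint : ∀ lam : ℝ, lam0 < lam →
      IntegrableOn (fun t : ℝ => (Real.exp (-lam * t) : ℂ) * f t) (Set.Ioi 0))
    (j : ℕ) (s : ℂ) (hs : lam0 < s.re) :
    HasDerivAt
      (fun x : ℂ => ∫ t in Set.Ioi (0:ℝ), (t : ℂ) ^ j * Complex.exp (-x * t) * f t)
      (-(∫ t in Set.Ioi (0:ℝ), (t : ℂ) ^ (j+1) * Complex.exp (-s * t) * f t)) s := by
  set ε := (s.re - lam0) / 3 with hεdef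
  have hε : 0 < ε := by rw [hεdef]; linarith
  set lam := lam0 + ε with hlamdef
  have hlam : lam0 < lam := by rw [hlamdef]; linarith
  obtain ⟨C, hC0, hC⟩ := aux_pow_exp (j+1) hε
  have key := hasDerivAt_integral_of_dominated_loc_of_deriv_le
    (μ := volume.restrict (Set.Ioi 0)) (x₀ := s)
    (F := fun (x : ℂ) (t : ℝ) => (t : ℂ) ^ j * Complex.exp (-x * t) * f t)
    (F' := fun (x : ℂ) (t : ℝ) => -((t : ℂ) ^ (j+1) * Complex.exp (-x * t) * f t))
    (bound := fun t : ℝ => C * ‖(Real.exp (-lam * t) : ℂ) * f t‖)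
    (Metric.ball_mem_nhds s hε)
    (Filter.Eventually.of_forall fun x => aux_meas f hmeas j x)
    (aux_integrable lam0 f hmeas hint j s hs)
    ((aux_meas f hmeas (j+1) s).neg)
    ?_
    ((hint lam hlam).norm.const_mul C)
    ?_
  · simpa [integral_neg] using key.2
  · -- h_bound
    rw [ae_restrict_iff' measurableSet_Ioi]
    filter_upwards with t ht
    intro x hx
    have hre : lam + ε ≤ x.re := by
      have h1 : |(x - s).re| ≤ ‖x - s‖ := Complex.abs_re_le_norm _
      rw [Complex.sub_re] at h1
      have h2 : ‖x - s‖ < ε := by rwa [Metric.mem_ball, Complex.dist_eq] at hx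
      have h3 : |x.re - s.re| < ε := lt_of_le_of_lt h1 h2
      have := abs_lt.mp h3
      have hsre : s.re = lam0 + 3 * ε := by rw [hεdef]; ring
      rw [hlamdef]; linarith [this.1]
    rw [norm_neg]
    refine aux_key f (j+1) t ht ?_
    calc t ^ (j+1) * Real.exp (-(x.re - lam) * t)
        ≤ t ^ (j+1) * Real.exp (-ε * t) := by
          have ht' : (0:ℝ) < t := ht
          have hle : -(x.re - lam) * t ≤ -ε * t := by nlinarith
          exact mul_le_mul_of_nonneg_left (Real.exp_le_exp.mpr hle) (by positivity)
      _ ≤ C := hC t ht.le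
  · -- h_diff
    rw [ae_restrict_iff' measurableSet_Ioi]
    filter_upwards with t ht
    intro x hx
    have h1 : HasDerivAt (fun x : ℂ => -x * (t : ℂ)) (-1 * t) x :=
      (hasDerivAt_id x).neg.mul_const _
    have h2 := ((h1.cexp.const_mul ((t : ℂ) ^ j)).mul_const (f t))
    refine h2.congr_deriv ?_
    rw [pow_succ]; ring

theorem laplace_transform_holomorphic
    (lam0 : ℝ) (f : ℝ → ℂ) (hmeas : Measurable f)
    (hint : ∀ lam : ℝ, lam0 < lam →
      IntegrableOn (fun t : ℝ => (Real.exp (-lam * t) : ℂ) * f t) (Set.Ioi 0)) :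
    (∀ k : ℕ, ∀ s : ℂ, lam0 < s.re →
      IntegrableOn (fun t : ℝ => (t : ℂ) ^ k * Complex.exp (-s * t) * f t)
        (Set.Ioi 0)) ∧
    DifferentiableOn ℂ
      (fun s : ℂ => ∫ t in Set.Ioi (0 : ℝ), Complex.exp (-s * t) * f t)
      {s : ℂ | lam0 < s.re} ∧
    (∀ k : ℕ, ∀ s : ℂ, lam0 < s.re →
      iteratedDeriv k
          (fun s : ℂ => ∫ t in Set.Ioi (0 : ℝ), Complex.exp (-s * t) * f t) s
        = (-1) ^ k *
            ∫ t in Set.Ioi (0 : ℝ), (t : ℂ) ^ k * Complex.exp (-s * t) * f t) := by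
  have hF0 : (fun s : ℂ => ∫ t in Set.Ioi (0 : ℝ), Complex.exp (-s * t) * f t)
      = fun s : ℂ => ∫ t in Set.Ioi (0 : ℝ), (t : ℂ) ^ 0 * Complex.exp (-s * t) * f t := by
    simp only [pow_zero, one_mul]
  have hopen : IsOpen {s : ℂ | lam0 < s.re} :=
    isOpen_lt continuous_const Complex.continuous_re
  have claim : ∀ k j : ℕ, ∀ s : ℂ, lam0 < s.re →
      iteratedDeriv k
          (fun x : ℂ => ∫ t in Set.Ioi (0 : ℝ), (t : ℂ) ^ j * Complex.exp (-x * t) * f t) s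
        = (-1) ^ k * ∫ t in Set.Ioi (0 : ℝ), (t : ℂ) ^ (j + k) * Complex.exp (-s * t) * f t := by
    intro k
    induction k with
    | zero => intro j s hs; simp
    | succ k ih =>
      intro j s hs
      rw [iteratedDeriv_succ']
      have hev : deriv (fun x : ℂ => ∫ t in Set.Ioi (0:ℝ), (t : ℂ) ^ j * Complex.exp (-x * t) * f t)
          =ᶠ[nhds s]
          (fun x : ℂ => -(∫ t in Set.Ioi (0:ℝ), (t : ℂ) ^ (j+1) * Complex.exp (-x * t) * f t)) := by
        filter_upwards [hopen.mem_nhds hs] with x hx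
        exact (aux_hasDeriv lam0 f hmeas hint j x hx).deriv
      rw [hev.iteratedDeriv_eq k, iteratedDeriv_fun_neg, ih (j+1) s hs]
      rw [show j + 1 + k = j + (k + 1) by ring]
      ring
  refine ⟨fun k s hs => aux_integrable lam0 f hmeas hint k s hs, ?_, ?_⟩
  · rw [hF0]
    intro s hs
    exact (aux_hasDeriv lam0 f hmeas hint 0 s hs).differentiableAt.differentiableWithinAt
  · intro k s hs
    rw [hF0]
    simpa using claim k 0 s hs
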